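/- Let 1 ≤ d ≤ r and 0 ≤ k ≤ r−1 be integers. Then every entry of the vector g^{r,d}_k is non-negative, and last(g^{r,d}_k) = 0 if and only if either (d is even, d = r and k = 0) or (d = 1 and k > 0). -/

import Mathlib

/-- `vC r d i` is the number of tuples `(u₁,…,u_d) ∈ ℤ^d` with `0 ≤ uₗ ≤ r` for all `l`
and `u₁ + ⋯ + u_d = i`.  For `d = 0` this is `1` if `i = 0` and `0` otherwise. -/
def vC (r d : ℕ) (i : ℤ) : ℕ :=
  (Finset.univ.filter fun u : Fin d → Fin (r + 1) => (∑ l, ((u l : ℕ) : ℤ)) = i).card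

/-- `gHat r d k i` is the `(i+1)`-st entry (`0 ≤ i ≤ ⌊d/2⌋+1`) of the vector
`ĝ^{r,d}_k ∈ ℤ^{⌊d/2⌋+2}`, defined by `g₀ = C(r−1,d,−k)` and
`g_i = C(r−1,d,ir−k) − C(r−1,d,(i−1)r−k)` for `i ≥ 1`; for `k ≥ r` the vector
`ĝ^{r,d}_k` is the zero vector.  The vector `g^{r,d}_k ∈ ℤ^{⌊d/2⌋+1}` is obtained
from `ĝ^{r,d}_k` by deleting its last entry, so its entries are `gHat r d k i`
for `0 ≤ i ≤ ⌊d/2⌋`; `last (g^{r,d}_k) = gHat r d k (d/2)` and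
`last (ĝ^{r,d}_k) = gHat r d k (d/2 + 1)`. -/
def gHat (r d k : ℕ) (i : ℕ) : ℤ :=
  if r ≤ k then 0
  else if i = 0 then (vC (r - 1) d (-(k : ℤ)) : ℤ)
  else (vC (r - 1) d ((i : ℤ) * (r : ℤ) - (k : ℤ)) : ℤ)
       - (vC (r - 1) d (((i : ℤ) - 1) * (r : ℤ) - (k : ℤ)) : ℤ)

open Finset

lemma vC_zero_of_neg (s d : ℕ) {j : ℤ} (hj : j < 0) : vC s d j = 0 := by
  rw [vC, Finset.card_eq_zero, Finset.filter_eq_empty_iff]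
  intro u _
  intro h
  have h0 : (0:ℤ) ≤ ∑ l, ((u l : ℕ) : ℤ) := Finset.sum_nonneg fun _ _ => Int.ofNat_nonneg _
  omega

lemma vC_zero_zero (s : ℕ) : vC s 0 0 = 1 := by
  rw [vC]
  have : (univ.filter fun u : Fin 0 → Fin (s + 1) => (∑ l, ((u l : ℕ) : ℤ)) = 0) = univ := by
    ext u; simp
  rw [this, card_univ]
  simp

lemma vC_succ (s d : ℕ) (j : ℤ) :
    vC s (d+1) j = ∑ t : Fin (s+1), vC s d (j - (t : ℕ)) := by
  classical
  rw [vC]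
  rw [Finset.card_eq_sum_card_fiberwise (f := fun u : Fin (d+1) → Fin (s+1) => u 0)
      (t := univ) (fun x _ => mem_univ _)]
  refine Finset.sum_congr rfl fun t _ => ?_
  rw [vC]
  refine Finset.card_nbij' (fun u => Fin.tail u) (fun v => Fin.cons t v) ?_ ?_ ?_ ?_
  · intro u hu
    simp only [Finset.mem_coe, mem_filter, mem_univ, true_and] at hu ⊢
    obtain ⟨h1, h2⟩ := hu
    rw [Fin.sum_univ_succ] at h1
    rw [← h2]
    have : ∑ l : Fin d, ((Fin.tail u l : ℕ) : ℤ) = ∑ l : Fin d, ((u l.succ : ℕ) : ℤ) := rfl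
    rw [this]
    linarith
  · intro v hv
    simp only [Finset.mem_coe, mem_filter, mem_univ, true_and] at hv ⊢
    constructor
    · rw [Fin.sum_univ_succ]
      simp only [Fin.cons_zero, Fin.cons_succ]
      linarith [hv]
    · simp
  · intro u hu
    simp only [Finset.mem_coe, mem_filter, mem_univ, true_and] at hu
    rw [← hu.2]
    exact Fin.cons_self_tail u
  · intro v _
    simp [Fin.tail_cons]

lemma vC_sym (s d : ℕ) (j : ℤ) : vC s d j = vC s d ((d : ℤ) * s - j) := by
  rw [vC, vC]
  refine Finset.card_nbij' (fun u => fun l => (u l).rev) (fun u => fun l => (u l).rev) ?_ ?_ ?_ ?_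
  · intro u hu
    simp only [Finset.mem_coe, mem_filter, mem_univ, true_and] at hu ⊢
    have key : ∀ l : Fin d, (((u l).rev : ℕ) : ℤ) = (s : ℤ) - ((u l : ℕ) : ℤ) := by
      intro l
      rw [Fin.val_rev]
      have := (u l).isLt
      omega
    rw [Finset.sum_congr rfl fun l _ => key l, Finset.sum_sub_distrib, Finset.sum_const,
      card_univ, Fintype.card_fin, hu]
    ring
  · intro u hu
    simp only [Finset.mem_coe, mem_filter, mem_univ, true_and] at hu ⊢
    have key : ∀ l : Fin d, (((u l).rev : ℕ) : ℤ) = (s : ℤ) - ((u l : ℕ) : ℤ) := by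
      intro l
      rw [Fin.val_rev]
      have := (u l).isLt
      omega
    rw [Finset.sum_congr rfl fun l _ => key l, Finset.sum_sub_distrib, Finset.sum_const,
      card_univ, Fintype.card_fin, hu]
    ring
  · intro u _; funext l; exact Fin.rev_rev _
  · intro u _; funext l; exact Fin.rev_rev _

lemma vC_pos (s : ℕ) : ∀ d : ℕ, ∀ j : ℤ, 0 ≤ j → j ≤ (d : ℤ) * s → 0 < vC s d j := by
  intro d
  induction d with
  | zero =>
    intro j h0 h1
    simp only [Nat.cast_zero, zero_mul] at h1
    have : j = 0 := le_antisymm h1 h0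
    rw [this, vC_zero_zero]; norm_num
  | succ d ih =>
    intro j h0 h1
    rw [vC_succ]
    have hts : min s j.toNat < s + 1 := by omega
    refine Finset.sum_pos' (fun t _ => Nat.zero_le _) ⟨⟨min s j.toNat, hts⟩, Finset.mem_univ _, ?_⟩
    have hD : (0:ℤ) ≤ (d : ℤ) * s := by positivity
    have hsum : j ≤ (d : ℤ) * s + s := by push_cast at h1; linarith
    rcases le_total (s : ℤ) j with hc | hc
    · have ht : ((min s j.toNat : ℕ) : ℤ) = (s : ℤ) := by omega
      apply ih <;> rw [ht] <;> linarith
    · have ht : ((min s j.toNat : ℕ) : ℤ) = j := by omega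
      apply ih <;> rw [ht] <;> linarith

lemma vC_succ' (s d : ℕ) (j : ℤ) :
    vC s (d+1) j = ∑ t ∈ Finset.range (s+1), vC s d (j - (t : ℕ)) := by
  rw [vC_succ]
  exact Fin.sum_univ_eq_sum_range (fun t => vC s d (j - (t : ℕ))) (s+1)

lemma vC_key (s d : ℕ) (j : ℤ) :
    vC s (d+1) (j+1) + vC s d (j - s) = vC s (d+1) j + vC s d (j+1) := by
  have e1 : vC s (d+1) (j+1) = (∑ i ∈ Finset.range s, vC s d (j - i)) + vC s d (j+1) := by
    rw [vC_succ', Finset.sum_range_succ']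
    congr 1
    · refine Finset.sum_congr rfl fun i _ => ?_
      congr 1
      push_cast
      ring
    · norm_num
  have e2 : vC s (d+1) j = (∑ i ∈ Finset.range s, vC s d (j - i)) + vC s d (j - s) := by
    rw [vC_succ', Finset.sum_range_succ]
  omega

lemma vC_mono (s : ℕ) : ∀ d : ℕ, ∀ a b : ℤ, a ≤ b → a + b ≤ (d : ℤ) * s →
    vC s d a ≤ vC s d b := by
  intro d
  induction d with
  | zero =>
    intro a b hab hsum
    simp only [Nat.cast_zero, zero_mul] at hsum
    rcases lt_or_ge a 0 with ha | ha
    · rw [vC_zero_of_neg s 0 ha]; exact Nat.zero_le _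
    · have : a = b := by omega
      rw [this]
  | succ d ih =>
    -- step lemma
    have key : ∀ j : ℤ, 2*j + 1 ≤ ((d : ℤ)+1) * s → vC s (d+1) j ≤ vC s (d+1) (j+1) := by
      intro j hj
      have h1 := vC_key s d j
      have h2 : vC s d (j - s) ≤ vC s d (j + 1) := by
        apply ih
        · have : (0:ℤ) ≤ s := by positivity
          linarith
        · have : ((d : ℤ)+1) * s = (d:ℤ)*s + s := by ring
          linarith
      omega
    intro a b hab hsum
    have chain : ∀ n : ℕ, ∀ a b : ℤ, a ≤ b → b - a = n → 2*b ≤ ((d:ℤ)+1) * s →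
        vC s (d+1) a ≤ vC s (d+1) b := by
      intro n
      induction n with
      | zero =>
        intro a b hab heq _
        have : a = b := by omega
        rw [this]
      | succ n ihn =>
        intro a b hab heq h2b
        have h1 : vC s (d+1) a ≤ vC s (d+1) (b-1) := ihn a (b-1) (by omega) (by omega) (by linarith)
        have h2 : vC s (d+1) (b-1) ≤ vC s (d+1) (b-1+1) := key (b-1) (by linarith)
        have hb : b - 1 + 1 = b := by ring
        rw [hb] at h2
        omega
    push_cast at hsum ⊢
    rcases le_or_gt (2*b) (((d:ℤ)+1) * s) with hc | hc
    · exact chain (b-a).toNat a b hab (by omega) hc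
    · have hsym := vC_sym s (d+1) b
      have harg : ((d:ℤ)+1) * s - b = (((d+1 : ℕ)) : ℤ) * s - b := by push_cast; ring
      rw [hsym]
      have : ((((d+1):ℕ)) : ℤ) * s - b = ((d:ℤ)+1)*s - b := by push_cast; ring
      rw [this]
      apply chain (((d:ℤ)+1)*s - b - a).toNat
      · linarith
      · omega
      · linarith

/-- strict comparison from a strict step hypothesis -/
lemma vC_strict_pair (s d : ℕ)
    (hS : ∀ j : ℤ, -1 ≤ j → 2*(j+1) ≤ (d:ℤ)*s → vC s d j < vC s d (j+1)) :
    ∀ a b : ℤ, a < b → 0 ≤ b → b ≤ (d:ℤ)*s → a + b < (d:ℤ)*s → vC s d a < vC s d b := by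
  intro a b hab h0b hbd habd
  set c : ℤ := if 2*b ≤ (d:ℤ)*s then b else (d:ℤ)*s - b with hc
  have hcb : vC s d b = vC s d c := by
    rw [hc]
    split_ifs with h
    · rfl
    · exact vC_sym s d b
  have h2c : 2*c ≤ (d:ℤ)*s := by rw [hc]; split_ifs with h <;> linarith
  have hac : a < c := by rw [hc]; split_ifs with h <;> linarith
  have h0c : 0 ≤ c := by rw [hc]; split_ifs with h <;> linarith
  have h1 : vC s d a ≤ vC s d (c-1) := by
    apply vC_mono
    · linarith
    · linarith
  have h2 : vC s d (c-1) < vC s d (c-1+1) := hS (c-1) (by linarith) (by linarith)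
  have he : c - 1 + 1 = c := by ring
  rw [he] at h2
  omega

lemma vC_strict (s : ℕ) (hs : 1 ≤ s) :
    ∀ d : ℕ, 2 ≤ d → ∀ j : ℤ, -1 ≤ j → 2*(j+1) ≤ (d:ℤ)*s → vC s d j < vC s d (j+1) := by
  intro d hd
  induction d, hd using Nat.le_induction with
  | base =>
    intro j hj h2j
    have hkey := vC_key s 1 j
    norm_num at hkey
    have hz : vC s 1 (j - s) = 0 := by
      apply vC_zero_of_neg
      push_cast at h2j
      linarith
    have hp : 0 < vC s 1 (j+1) := by
      apply vC_pos
      · linarith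
      · push_cast at h2j ⊢; linarith
    omega
  | succ d hd2 ih =>
    intro j hj h2j
    have hkey := vC_key s d j
    have hlt : vC s d (j - s) < vC s d (j + 1) := by
      rcases lt_or_ge (j - (s:ℤ)) 0 with hneg | hpos
      · rw [vC_zero_of_neg s d hneg]
        apply vC_pos
        · linarith
        · push_cast at h2j ⊢
          have hd1 : (1:ℤ) ≤ d := by exact_mod_cast hd2.trans' (by norm_num)
          have : (0:ℤ) ≤ s := by positivity
          nlinarith
      · -- here d ≥ 2 necessarily
        have hd3 : (2:ℤ) ≤ d := by exact_mod_cast hd2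
        apply vC_strict_pair s d (ih)
        · linarith [Int.natCast_nonneg s]
        · linarith
        · push_cast at h2j ⊢
          nlinarith
        · push_cast at h2j ⊢
          nlinarith
    omega

lemma vC_strict_lt (s : ℕ) (hs : 1 ≤ s) (d : ℕ) (hd : 2 ≤ d) :
    ∀ a b : ℤ, a < b → 0 ≤ b → b ≤ (d:ℤ)*s → a + b < (d:ℤ)*s → vC s d a < vC s d b :=
  vC_strict_pair s d (vC_strict s hs d hd)


/-- Let `1 ≤ d ≤ r` and `0 ≤ k ≤ r−1`.  Then every entry of `g^{r,d}_k` is non-negative,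
and `last(g^{r,d}_k) = 0` if and only if (`d` is even, `d = r` and `k = 0`) or
(`d = 1` and `k > 0`). -/
theorem stmt_12 (r d k : ℕ) (hd : 1 ≤ d) (hdr : d ≤ r) (hk : k ≤ r - 1) :
    (∀ i : ℕ, i ≤ d / 2 → 0 ≤ gHat r d k i) ∧
    (gHat r d k (d / 2) = 0 ↔ (Even d ∧ d = r ∧ k = 0) ∨ (d = 1 ∧ 0 < k)) := by
  have hr : 1 ≤ r := le_trans hd hdr
  have hkr : k < r := by omega
  have hcs : ((r - 1 : ℕ) : ℤ) = (r : ℤ) - 1 := by omega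
  have hrz : (1:ℤ) ≤ (r:ℤ) := by exact_mod_cast hr
  have hdz : (1:ℤ) ≤ (d:ℤ) := by exact_mod_cast hd
  have hdrz : (d:ℤ) ≤ (r:ℤ) := by exact_mod_cast hdr
  have hkz : (k:ℤ) < (r:ℤ) := by exact_mod_cast hkr
  have hkz0 : (0:ℤ) ≤ (k:ℤ) := Int.natCast_nonneg k
  constructor
  · intro i hi
    rw [gHat, if_neg (by omega)]
    split_ifs with h0
    · positivity
    · have h1i : 1 ≤ i := Nat.one_le_iff_ne_zero.mpr h0
      have h2i : 2 * i ≤ d := by omega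
      have h2iz : 2 * (i:ℤ) ≤ (d:ℤ) := by exact_mod_cast h2i
      have hiz : (1:ℤ) ≤ (i:ℤ) := by exact_mod_cast h1i
      rw [sub_nonneg]
      have hprod : 2 * (i:ℤ) * (r:ℤ) ≤ (d:ℤ) * (r:ℤ) :=
        mul_le_mul_of_nonneg_right h2iz (by linarith)
      have := vC_mono (r-1) d (((i:ℤ)-1)*(r:ℤ) - (k:ℤ)) ((i:ℤ)*(r:ℤ) - (k:ℤ))
        (by nlinarith) (by rw [hcs]; nlinarith)
      exact_mod_cast this
  · rcases eq_or_lt_of_le hd with hd1 | hd2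
    · -- d = 1
      have hd1' : d = 1 := hd1.symm
      subst hd1'
      rw [show (1:ℕ)/2 = 0 from rfl, gHat, if_neg (by omega), if_pos rfl]
      rcases Nat.eq_zero_or_pos k with hk0 | hk0
      · subst hk0
        have hpos := vC_pos (r-1) 1 0 (le_refl _) (by positivity)
        constructor
        · intro h
          exfalso
          norm_num at h
          omega
        · rintro (⟨he, _, _⟩ | ⟨_, hkpos⟩)
          · exact absurd he (by decide)
          · exact absurd hkpos (by norm_num)
      · rw [vC_zero_of_neg (r-1) 1 (by omega)]
        exact iff_of_true (by norm_num) (Or.inr ⟨rfl, hk0⟩)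
    · -- d ≥ 2
      have hd2z : (2:ℤ) ≤ (d:ℤ) := by exact_mod_cast hd2
      have hr2 : 2 ≤ r := le_trans hd2 hdr
      have hr2z : (2:ℤ) ≤ (r:ℤ) := by exact_mod_cast hr2
      have hs1 : 1 ≤ r - 1 := by omega
      rw [gHat, if_neg (by omega), if_neg (by omega)]
      generalize hidef : d / 2 = i
      have hi1 : 1 ≤ i := by omega
      have h2i : 2 * i ≤ d := by omega
      have h2iz : 2 * (i:ℤ) ≤ (d:ℤ) := by exact_mod_cast h2i
      have hiz : (1:ℤ) ≤ (i:ℤ) := by exact_mod_cast hi1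
      by_cases hcase : Even d ∧ d = r ∧ k = 0
      · obtain ⟨he, hdr', hk0⟩ := hcase
        subst hk0
        subst hdr'
        have h2i' : 2 * i = d := by
          rw [Nat.even_iff] at he
          omega
        have h2iz' : 2 * (i:ℤ) = (d:ℤ) := by exact_mod_cast h2i'
        have hval : vC (d-1) d (((i:ℤ)-1)*(d:ℤ) - ((0:ℕ):ℤ))
            = vC (d-1) d ((i:ℤ)*(d:ℤ) - ((0:ℕ):ℤ)) := by
          have hsym := vC_sym (d-1) d (((i:ℤ)-1)*(d:ℤ) - ((0:ℕ):ℤ))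
          have harg : (d:ℤ) * ((d-1:ℕ):ℤ) - ((((i:ℤ)-1))*(d:ℤ) - ((0:ℕ):ℤ))
              = (i:ℤ)*(d:ℤ) - ((0:ℕ):ℤ) := by
            rw [hcs]
            push_cast
            linear_combination (-(d:ℤ)) * h2iz'
          rw [hsym, harg]
        rw [hval, sub_self]
        constructor
        · intro _
          exact Or.inl ⟨he, rfl, rfl⟩
        · intro _
          rfl
      · -- strict case
        have hexp : ((i:ℤ)-1)*(r:ℤ) = (i:ℤ)*(r:ℤ) - (r:ℤ) := by ring
        have hir : (r:ℤ) ≤ (i:ℤ)*(r:ℤ) := le_mul_of_one_le_left (by linarith) hiz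
        have hprod : 2 * (i:ℤ) * (r:ℤ) ≤ (d:ℤ) * (r:ℤ) :=
          mul_le_mul_of_nonneg_right h2iz (by linarith)
        have hdd : 2 * (d:ℤ) ≤ (d:ℤ) * (r:ℤ) := by
          have := mul_le_mul_of_nonneg_left hr2z (show (0:ℤ) ≤ (d:ℤ) by linarith)
          linarith
        have hds : (d:ℤ)*((r:ℤ)-1) = (d:ℤ)*(r:ℤ) - (d:ℤ) := by ring
        have hlt : vC (r-1) d (((i:ℤ)-1)*(r:ℤ) - (k:ℤ)) < vC (r-1) d ((i:ℤ)*(r:ℤ) - (k:ℤ)) := by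
          apply vC_strict_lt (r-1) hs1 d hd2
          · linarith
          · linarith
          · rw [hcs]
            linarith
          · rw [hcs]
            have hsum : ((i:ℤ)-1)*(r:ℤ) + (i:ℤ)*(r:ℤ) = 2*(i:ℤ)*(r:ℤ) - (r:ℤ) := by ring
            rcases Nat.even_or_odd d with hev | hod
            · have h2ieq : 2 * i = d := by
                rw [Nat.even_iff] at hev
                omega
              have h2ieqz : 2 * (i:ℤ) = (d:ℤ) := by exact_mod_cast h2ieq
              have hprodeq : 2 * (i:ℤ) * (r:ℤ) = (d:ℤ) * (r:ℤ) := by rw [h2ieqz]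
              have hor : d < r ∨ 0 < k := by
                by_contra hcon
                push_neg at hcon
                exact hcase ⟨hev, by omega, by omega⟩
              rcases hor with h | h
              · have hz : (d:ℤ) < (r:ℤ) := by exact_mod_cast h
                linarith
              · have hz : (0:ℤ) < (k:ℤ) := by exact_mod_cast h
                linarith
            · have h2ieq : 2 * i + 1 = d := by
                rw [Nat.odd_iff] at hod
                omega
              have h2ieqz : 2 * (i:ℤ) = (d:ℤ) - 1 := by
                have h' : ((2*i+1 : ℕ) : ℤ) = (d:ℤ) := by exact_mod_cast h2ieq
                push_cast at h'
                linarith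
              have hprodeq : 2 * (i:ℤ) * (r:ℤ) = ((d:ℤ) - 1) * (r:ℤ) := by rw [h2ieqz]
              have hexp2 : ((d:ℤ)-1)*(r:ℤ) = (d:ℤ)*(r:ℤ) - (r:ℤ) := by ring
              linarith
        constructor
        · intro h
          exfalso
          have h1 : ((vC (r-1) d (((i:ℤ)-1)*(r:ℤ) - (k:ℤ)) : ℕ) : ℤ)
              < ((vC (r-1) d ((i:ℤ)*(r:ℤ) - (k:ℤ)) : ℕ) : ℤ) := by exact_mod_cast hlt
          omega
        · rintro (⟨he, h1, h2⟩ | ⟨h1, _⟩)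
          · exact absurd ⟨he, h1, h2⟩ hcase
          · omega
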